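/- (Proposition 3, terminal-boundary case, one dimension.) Let θ ∈ [0,1] be real and N a positive integer. Let Y = {1,…,N+1} and identify X = {2,…,N+1} with {1,…,N} via j ↦ j−1. Let π map a pair (s,l) with l ≥ 1 and s+l−1 ≥ 2 to the restricted patch on X with initial position max(s,2)−1 and side-length s+l−max(s,2). Then for every s_X ∈ {1,…,N} and every l_X ∈ {1,…,N−s_X+1}: P_Y({(s,l) : l ≥ 1, s+l−1 ≥ 2, π(s,l) = (s_X,l_X)}) / P_Y({(s,l) : l ≥ 1, s+l−1 ≥ 2}) = P_X({(s_X,l_X)}) / P_X({(s,l) : l ≥ 1}), where P_Y and P_X denote the original-construction candidate-patch distributions on dimension sizes N+1 and N respectively. -/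

import Mathlib

/-- Initial-position factor `c`: `c θ 1 = 1`, `c θ s = 1 - θ` for `s ≥ 2`. -/
noncomputable def c (θ : ℝ) (s : ℕ) : ℝ := if s = 1 then 1 else 1 - θ

/-- Truncated geometric side-length distribution on dimension size `N` given start `s`. -/
noncomputable def q (θ : ℝ) (N s l : ℕ) : ℝ :=
  if l = N - s + 1 then θ ^ (N - s) else θ ^ (l - 1) * (1 - θ)

/-- Conditional law of the side-length `l` given the start `s` in the original construction. -/
noncomputable def condL (θ : ℝ) (N s l : ℕ) : ℝ :=
  if l = 0 then (if s = 1 then 0 else θ) else c θ s * q θ N s l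

/-- The original-construction candidate-patch distribution on dimension size `N`. -/
noncomputable def origP (θ : ℝ) (N : ℕ) (p : ℕ × ℕ) : ℝ :=
  if 1 ≤ p.1 ∧ p.1 ≤ N ∧ p.2 ≤ N - p.1 + 1 then (1 / (N : ℝ)) * condL θ N p.1 p.2 else 0

lemma gsum (θ : ℝ) (K : ℕ) : ∑ l ∈ Finset.Icc 1 K, θ^(l-1)*(1-θ) = 1 - θ^K := by
  induction K with
  | zero => simp
  | succ K ih =>
    rw [Finset.sum_Icc_succ_top (by omega), ih, Nat.add_sub_cancel]
    ring

lemma qsum (θ : ℝ) (M s : ℕ) : ∑ l ∈ Finset.Icc 1 (M - s + 1), q θ M s l = 1 := by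
  rw [Finset.sum_Icc_succ_top (by omega)]
  have h1 : q θ M s (M - s + 1) = θ^(M-s) := by unfold q; rw [if_pos rfl]
  have h2 : ∀ l ∈ Finset.Icc 1 (M-s), q θ M s l = θ^(l-1)*(1-θ) := by
    intro l hl
    simp only [Finset.mem_Icc] at hl
    unfold q
    rw [if_neg (by omega)]
  rw [h1, Finset.sum_congr rfl h2, gsum]
  ring

lemma innerSumOrig (θ : ℝ) (M s : ℕ) (hs1 : 1 ≤ s) (hsM : s ≤ M) :
    ∑ l ∈ Finset.Icc 1 M, origP θ M (s, l) = (1 / (M:ℝ)) * c θ s := by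
  have hsub : Finset.Icc 1 (M - s + 1) ⊆ Finset.Icc 1 M := by
    intro x hx; simp only [Finset.mem_Icc] at *; omega
  rw [← Finset.sum_subset hsub (by
    intro x hx hnx
    simp only [Finset.mem_Icc] at hx hnx
    unfold origP
    rw [if_neg (by simp; omega)])]
  have h1 : ∀ l ∈ Finset.Icc 1 (M-s+1), origP θ M (s,l) = (1/(M:ℝ)) * (c θ s * q θ M s l) := by
    intro l hl
    simp only [Finset.mem_Icc] at hl
    unfold origP condL
    simp only
    rw [if_pos ⟨hs1, hsM, hl.2⟩, if_neg (by omega)]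
  rw [Finset.sum_congr rfl h1, ← Finset.mul_sum, ← Finset.mul_sum, qsum, mul_one]

lemma csum (θ : ℝ) (M : ℕ) (hM : 1 ≤ M) :
    ∑ s ∈ Finset.Icc 1 M, c θ s = 1 + ((M:ℝ) - 1) * (1-θ) := by
  have he : Finset.Icc 1 M = insert 1 (Finset.Icc 2 M) := by
    ext x; simp only [Finset.mem_Icc, Finset.mem_insert]; omega
  rw [he, Finset.sum_insert (by simp [Finset.mem_Icc])]
  have h2 : ∀ x ∈ Finset.Icc 2 M, c θ x = 1 - θ := by
    intro x hx; simp only [Finset.mem_Icc] at hx; unfold c; rw [if_neg (by omega)]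
  rw [Finset.sum_congr rfl h2, Finset.sum_const, Nat.card_Icc]
  have : (M + 1 - 2 : ℕ) = M - 1 := by omega
  rw [this, nsmul_eq_mul, Nat.cast_sub hM]
  unfold c
  norm_num

lemma mass (θ : ℝ) (M : ℕ) (hM : 1 ≤ M) :
    ∑ p ∈ Finset.Icc 1 M ×ˢ Finset.Icc 1 M, origP θ M p
      = (1/(M:ℝ)) * (1 + ((M:ℝ)-1)*(1-θ)) := by
  rw [Finset.sum_product]
  have h : ∀ s ∈ Finset.Icc 1 M, ∑ l ∈ Finset.Icc 1 M, origP θ M (s,l) = (1/(M:ℝ)) * c θ s := by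
    intro s hs; simp only [Finset.mem_Icc] at hs; exact innerSumOrig θ M s hs.1 hs.2
  rw [Finset.sum_congr rfl h, ← Finset.mul_sum, csum θ M hM]

lemma qid (θ : ℝ) (N lX : ℕ) (h1 : 1 ≤ lX) (h2 : lX ≤ N) :
    q θ (N+1) 1 (lX+1) + (1-θ) * q θ (N+1) 2 lX = q θ N 1 lX := by
  unfold q
  by_cases h : lX = N
  · subst h
    obtain ⟨m, rfl⟩ : ∃ m, lX = m + 1 := ⟨lX - 1, by omega⟩
    rw [if_pos (by omega), if_pos (by omega), if_pos (by omega)]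
    rw [show m + 1 + 1 - 1 = m + 1 from by omega, show m + 1 + 1 - 2 = m from by omega,
      show m + 1 - 1 = m from by omega]
    ring
  · obtain ⟨m, rfl⟩ : ∃ m, lX = m + 1 := ⟨lX - 1, by omega⟩
    rw [if_neg (by omega), if_neg (by omega), if_neg (by omega)]
    simp only [Nat.add_sub_cancel]
    ring

lemma qtrans (θ : ℝ) (N sX lX : ℕ) :
    q θ (N+1) (sX+1) lX = q θ N sX lX := by
  unfold q
  rw [show N + 1 - (sX + 1) = N - sX from by omega]

lemma origP11 (θ : ℝ) (N : ℕ) (hN : 1 ≤ N) :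
    origP θ (N+1) (1,1) = (1/((N:ℝ)+1)) * (1-θ) := by
  unfold origP condL c q
  simp only
  rw [if_pos (by omega), if_neg one_ne_zero, if_true,
    if_neg (show ¬((1:ℕ) = N+1-1+1) by omega)]
  push_cast
  norm_num

lemma denY (θ : ℝ) (N : ℕ) (hN : 1 ≤ N) :
    ∑ p ∈ Finset.Icc 1 (N+1) ×ˢ Finset.Icc 0 (N+1),
        (if 1 ≤ p.2 ∧ 2 ≤ p.1 + p.2 - 1 then origP θ (N+1) p else 0)
      = (1/((N:ℝ)+1)) * (1 + ((N:ℝ)-1)*(1-θ)) := by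
  have key : ∀ p ∈ Finset.Icc 1 (N+1) ×ˢ Finset.Icc 0 (N+1),
      (if 1 ≤ p.2 ∧ 2 ≤ p.1 + p.2 - 1 then origP θ (N+1) p else 0)
      = (if 1 ≤ p.2 then origP θ (N+1) p else 0)
        - (if p = (1,1) then origP θ (N+1) p else 0) := by
    rintro ⟨a, b⟩ hp
    simp only [Finset.mem_product, Finset.mem_Icc] at hp
    by_cases h1 : (a, b) = ((1 : ℕ), (1 : ℕ))
    · rw [Prod.mk.injEq] at h1
      obtain ⟨rfl, rfl⟩ := h1
      rw [if_neg (by omega), if_pos (by omega), if_pos rfl, sub_self]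
    · rw [Prod.mk.injEq] at h1
      by_cases h2 : 1 ≤ b
      · rw [if_pos ⟨h2, by omega⟩, if_pos h2,
          if_neg (by rw [Prod.mk.injEq]; tauto), sub_zero]
      · rw [if_neg (by tauto), if_neg h2, if_neg (by rw [Prod.mk.injEq]; omega), sub_zero]
  rw [Finset.sum_congr rfl key, Finset.sum_sub_distrib]
  have hsub : Finset.Icc 1 (N+1) ×ˢ Finset.Icc 1 (N+1)
      ⊆ Finset.Icc 1 (N+1) ×ˢ Finset.Icc 0 (N+1) := by
    rintro ⟨a, b⟩ hp
    simp only [Finset.mem_product, Finset.mem_Icc] at *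
    omega
  have e1 : ∑ p ∈ Finset.Icc 1 (N+1) ×ˢ Finset.Icc 0 (N+1),
      (if 1 ≤ p.2 then origP θ (N+1) p else 0)
      = ∑ p ∈ Finset.Icc 1 (N+1) ×ˢ Finset.Icc 1 (N+1), origP θ (N+1) p := by
    rw [← Finset.sum_subset hsub (by
      rintro ⟨a, b⟩ hp hnp
      simp only [Finset.mem_product, Finset.mem_Icc] at hp hnp
      rw [if_neg (by omega)])]
    apply Finset.sum_congr rfl
    rintro ⟨a, b⟩ hp
    simp only [Finset.mem_product, Finset.mem_Icc] at hp
    rw [if_pos hp.2.1]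
  have e2 : ∑ p ∈ Finset.Icc 1 (N+1) ×ˢ Finset.Icc 0 (N+1),
      (if p = ((1:ℕ),(1:ℕ)) then origP θ (N+1) p else 0) = origP θ (N+1) (1,1) := by
    rw [Finset.sum_ite_eq' _ _ (origP θ (N+1))]
    rw [if_pos (by simp only [Finset.mem_product, Finset.mem_Icc]; omega)]
  rw [e1, e2, mass θ (N+1) (by omega), origP11 θ N hN]
  push_cast
  have : ((N:ℝ)+1) ≠ 0 := by positivity
  field_simp
  ring

lemma numY (θ : ℝ) (N sX lX : ℕ) (hN : 1 ≤ N) (hs1 : 1 ≤ sX) (hsN : sX ≤ N)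
    (hl1 : 1 ≤ lX) (hl2 : lX ≤ N - sX + 1) :
    ∑ p ∈ Finset.Icc 1 (N + 1) ×ˢ Finset.Icc 0 (N + 1),
        (if 1 ≤ p.2 ∧ 2 ≤ p.1 + p.2 - 1 ∧
            max p.1 2 - 1 = sX ∧ p.1 + p.2 - max p.1 2 = lX then
          origP θ (N + 1) p else 0)
      = (1/((N:ℝ)+1)) * (c θ sX * q θ N sX lX) := by
  by_cases hs : sX = 1
  · subst hs
    have key : ∀ p ∈ Finset.Icc 1 (N+1) ×ˢ Finset.Icc 0 (N+1),
        (if 1 ≤ p.2 ∧ 2 ≤ p.1 + p.2 - 1 ∧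
            max p.1 2 - 1 = 1 ∧ p.1 + p.2 - max p.1 2 = lX then
          origP θ (N + 1) p else 0)
        = (if p = ((1:ℕ), lX+1) then origP θ (N+1) p else 0)
          + (if p = ((2:ℕ), lX) then origP θ (N+1) p else 0) := by
      rintro ⟨a, b⟩ hp
      simp only [Finset.mem_product, Finset.mem_Icc] at hp
      by_cases h1 : (a, b) = ((1:ℕ), lX+1)
      · rw [Prod.mk.injEq] at h1
        obtain ⟨rfl, rfl⟩ := h1
        rw [if_pos (by omega), if_pos rfl, if_neg (by rw [Prod.mk.injEq]; omega), add_zero]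
      · by_cases h2 : (a, b) = ((2:ℕ), lX)
        · rw [Prod.mk.injEq] at h2
          obtain ⟨rfl, rfl⟩ := h2
          rw [if_pos (by omega), if_neg (by rw [Prod.mk.injEq]; omega), if_pos rfl, zero_add]
        · rw [Prod.mk.injEq] at h1 h2
          rw [if_neg (by omega), if_neg (by rw [Prod.mk.injEq]; omega),
            if_neg (by rw [Prod.mk.injEq]; omega), add_zero]
    rw [Finset.sum_congr rfl key, Finset.sum_add_distrib,
      Finset.sum_ite_eq' _ _ (origP θ (N+1)), Finset.sum_ite_eq' _ _ (origP θ (N+1)),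
      if_pos (by simp only [Finset.mem_product, Finset.mem_Icc]; omega),
      if_pos (by simp only [Finset.mem_product, Finset.mem_Icc]; omega)]
    have e1 : origP θ (N+1) (1, lX+1) = (1/((N:ℝ)+1)) * q θ (N+1) 1 (lX+1) := by
      unfold origP condL c
      simp only
      rw [if_pos (by omega), if_neg (by omega), if_true]
      push_cast
      ring
    have e2 : origP θ (N+1) (2, lX) = (1/((N:ℝ)+1)) * ((1-θ) * q θ (N+1) 2 lX) := by
      unfold origP condL c
      simp only
      rw [if_pos (by omega), if_neg (by omega), if_neg (by omega)]
      push_cast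
      ring
    rw [e1, e2, show c θ 1 = 1 from by unfold c; rw [if_pos rfl], one_mul,
      ← qid θ N lX hl1 (by omega)]
    ring
  · have hs2 : 2 ≤ sX := by omega
    have key : ∀ p ∈ Finset.Icc 1 (N+1) ×ˢ Finset.Icc 0 (N+1),
        (if 1 ≤ p.2 ∧ 2 ≤ p.1 + p.2 - 1 ∧
            max p.1 2 - 1 = sX ∧ p.1 + p.2 - max p.1 2 = lX then
          origP θ (N + 1) p else 0)
        = (if p = (sX+1, lX) then origP θ (N+1) p else 0) := by
      rintro ⟨a, b⟩ hp
      simp only [Finset.mem_product, Finset.mem_Icc] at hp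
      by_cases h1 : (a, b) = (sX+1, lX)
      · rw [Prod.mk.injEq] at h1
        obtain ⟨rfl, rfl⟩ := h1
        rw [if_pos (by omega), if_pos rfl]
      · rw [Prod.mk.injEq] at h1
        rw [if_neg (by omega), if_neg (by rw [Prod.mk.injEq]; omega)]
    rw [Finset.sum_congr rfl key, Finset.sum_ite_eq' _ _ (origP θ (N+1)),
      if_pos (by simp only [Finset.mem_product, Finset.mem_Icc]; omega)]
    have e1 : origP θ (N+1) (sX+1, lX) = (1/((N:ℝ)+1)) * ((1-θ) * q θ (N+1) (sX+1) lX) := by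
      unfold origP condL c
      simp only
      rw [if_pos (by omega), if_neg (by omega), if_neg (by omega)]
      push_cast
      ring
    rw [e1, qtrans, show c θ sX = 1 - θ from by unfold c; rw [if_neg hs]]

/-- Proposition 3, terminal-boundary case, one dimension: with `Y = {1,…,N+1}`,
`X = {2,…,N+1}` identified with `{1,…,N}` via `j ↦ j−1`, and
`π (s,l) = (max s 2 − 1, s + l − max s 2)` defined on patches with `l ≥ 1` and
`s + l − 1 ≥ 2`, for every admissible target `(s_X, l_X)` on `X`:
`P_Y(π⁻¹(s_X,l_X)) / P_Y(restriction nonempty) = P_X((s_X,l_X)) / P_X(l ≥ 1)`. -/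
theorem spp_position_self_consistent_terminal (θ : ℝ) (hθ0 : 0 ≤ θ) (hθ1 : θ ≤ 1)
    (N : ℕ) (hN : 0 < N) (sX lX : ℕ)
    (hsX : 1 ≤ sX ∧ sX ≤ N) (hlX : 1 ≤ lX ∧ lX ≤ N - sX + 1) :
    (∑ p ∈ Finset.Icc 1 (N + 1) ×ˢ Finset.Icc 0 (N + 1),
        if 1 ≤ p.2 ∧ 2 ≤ p.1 + p.2 - 1 ∧
            max p.1 2 - 1 = sX ∧ p.1 + p.2 - max p.1 2 = lX then
          origP θ (N + 1) p else 0) /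
    (∑ p ∈ Finset.Icc 1 (N + 1) ×ˢ Finset.Icc 0 (N + 1),
        if 1 ≤ p.2 ∧ 2 ≤ p.1 + p.2 - 1 then origP θ (N + 1) p else 0)
      = origP θ N (sX, lX) /
        (∑ p ∈ Finset.Icc 1 N ×ˢ Finset.Icc 1 N, origP θ N p) := by
  obtain ⟨hs1, hsN⟩ := hsX
  obtain ⟨hl1, hl2⟩ := hlX
  have eP : origP θ N (sX, lX) = (1/(N:ℝ)) * (c θ sX * q θ N sX lX) := by
    unfold origP condL
    simp only
    rw [if_pos ⟨hs1, hsN, hl2⟩, if_neg (by omega)]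
  have ha : (1/((N:ℝ)+1)) ≠ 0 := by positivity
  have hb : (1/(N:ℝ)) ≠ 0 := by
    have : (0:ℝ) < N := by exact_mod_cast hN
    positivity
  rw [numY θ N sX lX hN hs1 hsN hl1 hl2, denY θ N hN, mass θ N hN, eP,
    mul_div_mul_left _ _ ha, mul_div_mul_left _ _ hb]
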